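/- Let X be a Banach space, U a topological space, δ > 0, and φ : U×X → X a continuous map such that φ(λ,0) = 0 for all λ ∈ U, each φ_λ = φ(λ,·) is Fréchet differentiable on the open ball B(0,δ), and ‖I_X − Dφ_λ(x)‖ ≤ 1/2 for all x ∈ B(0,δ) and λ ∈ U. Then for every λ ∈ U and every y in the open ball B(0,δ/2) there exists a unique x in the closed ball B̄(0,δ) with φ_λ(x) = y; this x lies in B(0,δ), and the map (λ,y) ↦ x from U×B(0,δ/2) to X is continuous. -/

import Mathlib

open Filter Metric NNReal

noncomputable section

/-- If `φ : U × X → X` is continuous with `φ(λ,0) = 0`, each `φ_λ` is differentiable on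
`B(0,δ)` with `‖I - Dφ_λ(x)‖ ≤ 1/2` there, then for every `λ` and every
`y ∈ B(0,δ/2)` there is a unique `x ∈ B̄(0,δ)` with `φ_λ(x) = y`; this `x` lies in
`B(0,δ)` and depends continuously on `(λ,y)`. -/
theorem local_inversion_with_parameters {X U : Type*}
    [NormedAddCommGroup X] [NormedSpace ℝ X] [CompleteSpace X]
    [TopologicalSpace U]
    (δ : ℝ) (hδ : 0 < δ)
    (φ : U × X → X) (hφcont : Continuous φ)
    (hφ0 : ∀ lam : U, φ (lam, 0) = 0)
    (D : U → X → (X →L[ℝ] X))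
    (hD : ∀ (lam : U), ∀ x ∈ ball (0 : X) δ,
      HasFDerivAt (fun v => φ (lam, v)) (D lam x) x)
    (hDbound : ∀ (lam : U), ∀ x ∈ ball (0 : X) δ,
      ‖ContinuousLinearMap.id ℝ X - D lam x‖ ≤ 1 / 2) :
    ∃ g : U → X → X,
      (∀ (lam : U), ∀ y ∈ ball (0 : X) (δ / 2),
        g lam y ∈ ball (0 : X) δ ∧
        φ (lam, g lam y) = y ∧
        ∀ x ∈ closedBall (0 : X) δ, φ (lam, x) = y → x = g lam y) ∧
      ContinuousOn (fun p : U × X => g p.1 p.2) (Set.univ ×ˢ ball (0 : X) (δ / 2)) := by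
  classical
  -- the auxiliary map `f lam x = x - φ(lam, x)`
  set f : U → X → X := fun lam x => x - φ (lam, x) with hfdef
  have hfc : ∀ lam : U, Continuous (f lam) := fun lam =>
    continuous_id.sub (hφcont.comp (Continuous.prodMk_right lam))
  have hf0 : ∀ lam : U, f lam 0 = 0 := fun lam => by simp [hfdef, hφ0 lam]
  -- `f lam` is ½-Lipschitz on the open ball, hence on the closed ball.
  have hlip : ∀ lam : U, LipschitzOnWith (1 / 2 : ℝ≥0) (f lam) (ball (0 : X) δ) := by
    intro lam
    apply (convex_ball (0 : X) δ).lipschitzOnWith_of_nnnorm_hasFDerivWithin_le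
      (f' := fun x => ContinuousLinearMap.id ℝ X - D lam x)
    · intro x hx
      exact ((hasFDerivAt_id x).sub (hD lam x hx)).hasFDerivWithinAt
    · intro x hx
      rw [← NNReal.coe_le_coe]
      push_cast
      simpa using hDbound lam x hx
  have key : ∀ lam : U, ∀ x ∈ closedBall (0 : X) δ, ∀ x' ∈ closedBall (0 : X) δ,
      ‖f lam x - f lam x'‖ ≤ 1 / 2 * ‖x - x'‖ := by
    intro lam x hx x' hx'
    have hcl : closedBall (0 : X) δ ×ˢ closedBall (0 : X) δ ⊆
        {p : X × X | ‖f lam p.1 - f lam p.2‖ ≤ 1 / 2 * ‖p.1 - p.2‖} := by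
      have hclosed : IsClosed {p : X × X | ‖f lam p.1 - f lam p.2‖ ≤ 1 / 2 * ‖p.1 - p.2‖} := by
        apply isClosed_le
        · exact (((hfc lam).comp continuous_fst).sub ((hfc lam).comp continuous_snd)).norm
        · exact continuous_const.mul (continuous_fst.sub continuous_snd).norm
      have hball : ball (0 : X) δ ×ˢ ball (0 : X) δ ⊆
          {p : X × X | ‖f lam p.1 - f lam p.2‖ ≤ 1 / 2 * ‖p.1 - p.2‖} := by
        rintro ⟨a, b⟩ ⟨ha, hb⟩
        have := (hlip lam).dist_le_mul a ha b hb
        simpa [dist_eq_norm] using this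
      calc closedBall (0 : X) δ ×ˢ closedBall (0 : X) δ
          = closure (ball (0 : X) δ) ×ˢ closure (ball (0 : X) δ) := by
            rw [closure_ball _ (ne_of_gt hδ)]
        _ = closure (ball (0 : X) δ ×ˢ ball (0 : X) δ) := (closure_prod_eq).symm
        _ ⊆ {p : X × X | ‖f lam p.1 - f lam p.2‖ ≤ 1 / 2 * ‖p.1 - p.2‖} :=
            hclosed.closure_subset_iff.2 hball
    exact hcl (Set.mk_mem_prod hx hx')
  -- uniqueness on the closed ball
  have uniq : ∀ lam : U, ∀ x ∈ closedBall (0 : X) δ, ∀ x' ∈ closedBall (0 : X) δ,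
      φ (lam, x) = φ (lam, x') → x = x' := by
    intro lam x hx x' hx' h
    have h1 : f lam x - f lam x' = x - x' := by simp only [hfdef]; rw [h]; abel
    have h2 := key lam x hx x' hx'
    rw [h1] at h2
    have : ‖x - x'‖ = 0 := by nlinarith [norm_nonneg (x - x')]
    rwa [norm_sub_eq_zero_iff] at this
  -- existence with the a priori bound `‖x‖ ≤ 2‖y‖`
  have exu : ∀ lam : U, ∀ y ∈ ball (0 : X) (δ / 2),
      ∃ x : X, ‖x‖ ≤ 2 * ‖y‖ ∧ φ (lam, x) = y := by
    intro lam y hy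
    have hy' : ‖y‖ < δ / 2 := by simpa using hy
    set r : ℝ := 2 * ‖y‖ with hr
    have hr0 : 0 ≤ r := by positivity
    have hrδ : r < δ := by linarith
    set ψ : X → X := fun x => f lam x + y with hψ
    have hsub : closedBall (0 : X) r ⊆ closedBall (0 : X) δ :=
      closedBall_subset_closedBall (le_of_lt hrδ)
    have hmaps : Set.MapsTo ψ (closedBall (0 : X) r) (closedBall (0 : X) r) := by
      intro x hx
      have hx' : ‖x‖ ≤ r := by simpa using hx
      have h0 : (0 : X) ∈ closedBall (0 : X) δ := mem_closedBall_self (le_of_lt hδ)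
      have := key lam x (hsub hx) 0 h0
      rw [hf0 lam, sub_zero, sub_zero] at this
      have : ‖ψ x‖ ≤ 1 / 2 * ‖x‖ + ‖y‖ := by
        calc ‖ψ x‖ ≤ ‖f lam x‖ + ‖y‖ := norm_add_le _ _
          _ ≤ 1 / 2 * ‖x‖ + ‖y‖ := by linarith
      simp only [mem_closedBall, dist_zero_right]
      linarith
    have hLip : LipschitzOnWith (1 / 2 : ℝ≥0) ψ (closedBall (0 : X) r) := by
      rw [lipschitzOnWith_iff_dist_le_mul]
      intro x hx x' hx'
      have := key lam x (hsub hx) x' (hsub hx')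
      have heq : ψ x - ψ x' = f lam x - f lam x' := by simp [hψ]
      rw [dist_eq_norm, dist_eq_norm, heq]
      simpa using this
    have hcontr : ContractingWith (1 / 2 : ℝ≥0) (hmaps.restrict ψ _ _) :=
      ⟨by exact_mod_cast (by norm_num : (1 : ℝ) / 2 < 1), hLip.mapsToRestrict hmaps⟩
    have h0mem : (0 : X) ∈ closedBall (0 : X) r := mem_closedBall_self hr0
    obtain ⟨z, hz, hfix, -⟩ := hcontr.exists_fixedPoint'
      (isClosed_closedBall.isComplete) hmaps h0mem (edist_ne_top _ _)
    refine ⟨z, by simpa [hr] using hz, ?_⟩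
    have h : z - φ (lam, z) + y = z := hfix
    have : y = φ (lam, z) := by
      apply add_left_cancel (a := z - φ (lam, z))
      rw [h]
      abel
    exact this.symm
  -- define `g` by choice
  set g : U → X → X := fun lam y =>
    if h : y ∈ ball (0 : X) (δ / 2) then (exu lam y h).choose else 0 with hgdef
  have hgspec : ∀ lam : U, ∀ y ∈ ball (0 : X) (δ / 2),
      ‖g lam y‖ ≤ 2 * ‖y‖ ∧ φ (lam, g lam y) = y := by
    intro lam y hy
    have : g lam y = (exu lam y hy).choose := by rw [hgdef]; simp [hy]
    rw [this]
    exact (exu lam y hy).choose_spec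
  have hgball : ∀ lam : U, ∀ y ∈ ball (0 : X) (δ / 2), g lam y ∈ ball (0 : X) δ := by
    intro lam y hy
    have hy' : ‖y‖ < δ / 2 := by simpa using hy
    have := (hgspec lam y hy).1
    simp only [mem_ball, dist_zero_right]
    linarith
  refine ⟨g, ?_, ?_⟩
  · intro lam y hy
    refine ⟨hgball lam y hy, (hgspec lam y hy).2, ?_⟩
    intro x hx hφx
    exact uniq lam x hx (g lam y) (ball_subset_closedBall (hgball lam y hy))
      (by rw [hφx, (hgspec lam y hy).2])
  · -- continuity
    intro p₀ hp₀
    obtain ⟨-, hy₀⟩ := hp₀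
    set lam₀ := p₀.1
    set y₀ := p₀.2
    set g₀ : X := g lam₀ y₀ with hg₀
    have hg₀ball : g₀ ∈ closedBall (0 : X) δ := ball_subset_closedBall (hgball lam₀ y₀ hy₀)
    -- the key estimate
    have hest : ∀ p : U × X, p ∈ Set.univ ×ˢ ball (0 : X) (δ / 2) →
        dist (g p.1 p.2) g₀ ≤ 2 * (‖φ (p.1, g₀) - φ (lam₀, g₀)‖ + ‖p.2 - y₀‖) := by
      rintro ⟨lam, y⟩ ⟨-, hy⟩
      set x : X := g lam y with hx
      have hxball : x ∈ closedBall (0 : X) δ := ball_subset_closedBall (hgball lam y hy)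
      have hφx : φ (lam, x) = y := (hgspec lam y hy).2
      have hφg₀ : φ (lam₀, g₀) = y₀ := (hgspec lam₀ y₀ hy₀).2
      have hdecomp : x - g₀ = (f lam x - f lam g₀) + ((φ (lam₀, g₀) - φ (lam, g₀)) + (y - y₀)) := by
        simp only [hfdef, hφx, hφg₀]
        abel
      have h1 : ‖f lam x - f lam g₀‖ ≤ 1 / 2 * ‖x - g₀‖ := key lam x hxball g₀ hg₀ball
      have h2 : ‖x - g₀‖ ≤ 1 / 2 * ‖x - g₀‖ + (‖φ (lam₀, g₀) - φ (lam, g₀)‖ + ‖y - y₀‖) := by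
        calc ‖x - g₀‖ = ‖(f lam x - f lam g₀) + ((φ (lam₀, g₀) - φ (lam, g₀)) + (y - y₀))‖ := by
              rw [← hdecomp]
          _ ≤ ‖f lam x - f lam g₀‖ + ‖(φ (lam₀, g₀) - φ (lam, g₀)) + (y - y₀)‖ := norm_add_le _ _
          _ ≤ 1 / 2 * ‖x - g₀‖ + (‖φ (lam₀, g₀) - φ (lam, g₀)‖ + ‖y - y₀‖) := by
              have := norm_add_le (φ (lam₀, g₀) - φ (lam, g₀)) (y - y₀)
              linarith
      have hsymm : ‖φ (lam₀, g₀) - φ (lam, g₀)‖ = ‖φ (lam, g₀) - φ (lam₀, g₀)‖ :=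
        norm_sub_rev _ _
      rw [dist_eq_norm]
      rw [hsymm] at h2
      linarith
    -- conclude by squeezing
    rw [ContinuousWithinAt, tendsto_iff_dist_tendsto_zero]
    apply squeeze_zero' (Eventually.of_forall fun _ => dist_nonneg)
      (eventually_nhdsWithin_of_forall hest)
    have hB : Continuous fun p : U × X => 2 * (‖φ (p.1, g₀) - φ (lam₀, g₀)‖ + ‖p.2 - y₀‖) := by
      apply continuous_const.mul
      apply Continuous.add
      · exact ((hφcont.comp (continuous_fst.prodMk continuous_const)).sub continuous_const).norm
      · exact (continuous_snd.sub continuous_const).norm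
    have hB0 : (fun p : U × X => 2 * (‖φ (p.1, g₀) - φ (lam₀, g₀)‖ + ‖p.2 - y₀‖)) p₀ = 0 := by
      simp [lam₀, y₀]
    have := (hB.tendsto p₀).mono_left (nhdsWithin_le_nhds (s := Set.univ ×ˢ ball (0 : X) (δ / 2)))
    convert this using 2
    simp [lam₀, y₀]

end
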